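/- For all natural numbers n and real parameters a, b, x (with nonzero denominators), the Jacobi polynomials satisfy P_n^{(a,b+1)}(x) = (1/(n+1))·(P_{n+1}^{(a,b)})'(x) − (2(b+1+n)/((2n+2+a+b)(2n+a+b+1)))·(P_n^{(a,b)})'(x). -/

import Mathlib

set_option maxHeartbeats 1000000

/-- Rising factorial `(a)_k = a(a+1)⋯(a+k-1)`. -/
noncomputable def rf (a : ℝ) (k : ℕ) : ℝ := ∏ j ∈ Finset.range k, (a + j)

lemma rf_succ (a : ℝ) (k : ℕ) : rf a (k+1) = rf a k * (a + k) := Finset.prod_range_succ _ _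

lemma rf_succ' (a : ℝ) (k : ℕ) : rf a (k+1) = a * rf (a+1) k := by
  rw [rf, Finset.prod_range_succ']
  simp only [Nat.cast_zero, add_zero, mul_comm]
  congr 1
  apply Finset.prod_congr rfl
  intro j _
  push_cast
  ring

lemma rf_neg_self (n : ℕ) : rf (-(n:ℝ)) (n+1) = 0 := by
  apply Finset.prod_eq_zero (Finset.self_mem_range_succ n)
  simp

lemma main_sum (L T1 T2 : ℕ → ℝ) (m : ℕ) (h0 : T1 0 = 0) (h0' : T2 0 = 0)
    (hm : T2 (m+1) = 0) (hk : ∀ k ≤ m, L k = T1 (k+1) - T2 (k+1)) :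
    ∑ k ∈ Finset.range (m+1), L k =
      (∑ k ∈ Finset.range (m+1+1), T1 k) - ∑ k ∈ Finset.range (m+1), T2 k := by
  rw [Finset.sum_range_succ' T1, h0, add_zero, Finset.sum_range_succ' T2, h0', add_zero]
  have h2 : ∑ k ∈ Finset.range (m+1), T2 (k+1) = ∑ k ∈ Finset.range m, T2 (k+1) := by
    rw [Finset.sum_range_succ, hm, add_zero]
  rw [← h2, ← Finset.sum_sub_distrib]
  exact Finset.sum_congr rfl fun k hkm => hk k (Nat.lt_succ_iff.mp (Finset.mem_range.mp hkm))

theorem coeff_id (N K a b R1 R2 R3 R4 R5 F P Y : ℝ)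
  (h1 : 2 * N + 2 + a + b ≠ 0) (h2 : 2 * N + a + b + 1 ≠ 0)
  (hD2 : N + a + b + 1 + N ≠ 0) (hD1 : N + a + b + 1 + 1 + N ≠ 0)
  (hA : R2 ≠ 0) (hfa : R5 ≠ 0) (hak : a + 1 + K ≠ 0) (hfact : F ≠ 0)
  (hk1 : K + 1 ≠ 0) (hn1 : N + 1 ≠ 0) (hs : N + a + b + 1 ≠ 0) :
  R1 * P / R2 * (R3 * R4 / (R5 * F) * Y) =
    1 / (N + 1) *
        (R1 * (a + 1 + N) * (P * 2) / (R2 * (N + a + b + 1 + 1 + N)) *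
          (-(N + 1) * R3 * (R4 * (N + a + b + 1 + 1 + K)) /
              (R5 * (a + 1 + K) * ((K + 1) * F)) *
            ((K + 1) * Y * -(1 / 2)))) -
      2 * (b + 1 + N) / ((2 * N + 2 + a + b) * (2 * N + a + b + 1)) *
        (R1 * P / ((N + a + b + 1) * R2 / (N + a + b + 1 + N)) *
          (R3 * (-N + K) * ((N + a + b + 1) * R4) /
              (R5 * (a + 1 + K) * ((K + 1) * F)) *
            ((K + 1) * Y * -(1 / 2)))) := by
  have h1' : (N + 1) * 2 + a + b ≠ 0 := fun h => h1 (by linarith)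
  have h2' : N * 2 + a + b + 1 ≠ 0 := fun h => h2 (by linarith)
  field_simp
  ring

/-- Monic Jacobi polynomials
`P_n^{(a,b)}(x) = ((a+1)_n 2^n / (n+a+b+1)_n) ∑_{k=0}^n
  ((-n)_k (n+a+b+1)_k / ((a+1)_k k!)) ((1-x)/2)^k`. -/
noncomputable def jacobi (a b : ℝ) (n : ℕ) (x : ℝ) : ℝ :=
  rf (a + 1) n * 2 ^ n / rf ((n : ℝ) + a + b + 1) n *
    ∑ k ∈ Finset.range (n + 1),
      rf (-(n : ℝ)) k * rf ((n : ℝ) + a + b + 1) k / (rf (a + 1) k * (k.factorial : ℝ)) *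
        ((1 - x) / 2) ^ k

/-- Derivative of the monic Jacobi polynomial with respect to `x`. -/
noncomputable def jacobiDeriv (a b : ℝ) (n : ℕ) (x : ℝ) : ℝ := deriv (jacobi a b n) x

lemma jacobiDeriv_eq (a b : ℝ) (n : ℕ) (x : ℝ) :
    jacobiDeriv a b n x = rf (a + 1) n * 2 ^ n / rf ((n : ℝ) + a + b + 1) n *
    ∑ k ∈ Finset.range (n + 1),
      rf (-(n : ℝ)) k * rf ((n : ℝ) + a + b + 1) k / (rf (a + 1) k * (k.factorial : ℝ)) *
        ((k : ℝ) * ((1 - x) / 2) ^ (k-1) * (-(1/2))) := by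
  have h : HasDerivAt (jacobi a b n)
      (rf (a + 1) n * 2 ^ n / rf ((n : ℝ) + a + b + 1) n *
      ∑ k ∈ Finset.range (n + 1),
        rf (-(n : ℝ)) k * rf ((n : ℝ) + a + b + 1) k / (rf (a + 1) k * (k.factorial : ℝ)) *
          ((k : ℝ) * ((1 - x) / 2) ^ (k-1) * (-(1/2)))) x := by
    unfold jacobi
    apply HasDerivAt.const_mul
    apply HasDerivAt.fun_sum
    intro k _
    apply HasDerivAt.const_mul
    have hy : HasDerivAt (fun x : ℝ => (1 - x) / 2) (-(1/2)) x := by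
      have := ((hasDerivAt_id x).const_sub 1).div_const 2
      exact this.congr_deriv (by norm_num)
    simpa using hy.fun_pow k
  rw [jacobiDeriv, h.deriv]

theorem jacobi_parameter_shift_b (n : ℕ) (a b x : ℝ)
    (hpoch1 : ∀ k ≤ n + 1, rf (a + 1) k ≠ 0)
    (hpoch2 : ∀ m ≤ n + 1, rf ((m : ℝ) + a + b + 1) m ≠ 0)
    (hpoch3 : rf ((n : ℝ) + a + b + 2) n ≠ 0)
    (h1 : 2 * (n : ℝ) + 2 + a + b ≠ 0) (h2 : 2 * (n : ℝ) + a + b + 1 ≠ 0) :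
    jacobi a (b + 1) n x =
      (1 / ((n : ℝ) + 1)) * jacobiDeriv a b (n + 1) x -
        (2 * (b + 1 + n) / ((2 * n + 2 + a + b) * (2 * n + a + b + 1))) *
          jacobiDeriv a b n x := by
  rw [jacobi, jacobiDeriv_eq, jacobiDeriv_eq]
  simp only [Finset.mul_sum]
  apply main_sum
  · simp
  · simp
  · simp [rf_neg_self]
  · intro k hkn
    simp only [Nat.add_sub_cancel]
    push_cast [Nat.factorial_succ]
    have eb : ((n:ℝ) + a + (b+1) + 1) = ((n:ℝ)+a+b+1)+1 := by ring
    have ec : ((n:ℝ) + 1 + a + b + 1) = ((n:ℝ)+a+b+1)+1 := by ring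
    rw [eb, ec]
    rw [rf_succ (a+1) n, rf_succ (((n:ℝ)+a+b+1)+1) n, rf_succ' (-((n:ℝ)+1)) k,
      rf_succ (((n:ℝ)+a+b+1)+1) k, rf_succ (-(n:ℝ)) k, rf_succ' ((n:ℝ)+a+b+1) k,
      rf_succ (a+1) k]
    have en : (-((n:ℝ)+1)+1) = -(n:ℝ) := by ring
    rw [en]
    have hD2 : ((n:ℝ)+a+b+1) + (n:ℝ) ≠ 0 := fun h => h2 (by linarith)
    have hD1 : (((n:ℝ)+a+b+1)+1) + (n:ℝ) ≠ 0 := fun h => h1 (by linarith)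
    have hA : rf (((n:ℝ)+a+b+1)+1) n ≠ 0 := by
      have h : ((n:ℝ)+a+b+1)+1 = (n:ℝ)+a+b+2 := by ring
      rw [h]; exact hpoch3
    have hfa : rf (a+1) k ≠ 0 := hpoch1 k (by omega)
    have hak : (a + 1 + (k:ℝ)) ≠ 0 := by
      have h := hpoch1 (k+1) (by omega)
      rw [rf_succ] at h
      exact (mul_ne_zero_iff.mp h).2
    have hfact : ((Nat.factorial k : ℝ)) ≠ 0 := Nat.cast_ne_zero.mpr k.factorial_ne_zero
    have hk1 : ((k:ℝ)+1) ≠ 0 := by positivity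
    have hn1 : ((n:ℝ)+1) ≠ 0 := by positivity
    have hs : ((n:ℝ)+a+b+1) ≠ 0 := by
      rcases Nat.eq_zero_or_pos n with hn0 | hn0
      · subst hn0; intro h; apply h2; push_cast at h ⊢; linarith
      · obtain ⟨m, rfl⟩ := Nat.exists_eq_succ_of_ne_zero hn0.ne'
        have h := hpoch2 (m+1) (by omega)
        rw [rf_succ'] at h
        intro h0
        apply (mul_ne_zero_iff.mp h).1
        push_cast at h0 ⊢
        linarith
    have hrel : rf ((n:ℝ)+a+b+1) n * (((n:ℝ)+a+b+1) + (n:ℝ)) =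
        ((n:ℝ)+a+b+1) * rf (((n:ℝ)+a+b+1)+1) n :=
      (rf_succ ((n:ℝ)+a+b+1) n).symm.trans (rf_succ' ((n:ℝ)+a+b+1) n)
    have hsn : rf ((n:ℝ)+a+b+1) n =
        ((n:ℝ)+a+b+1) * rf (((n:ℝ)+a+b+1)+1) n / (((n:ℝ)+a+b+1) + (n:ℝ)) := by
      rw [eq_div_iff hD2]; exact hrel
    rw [hsn, pow_succ]
    exact coeff_id (n:ℝ) (k:ℝ) a b (rf (a+1) n) (rf (((n:ℝ)+a+b+1)+1) n) (rf (-(n:ℝ)) k)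
      (rf (((n:ℝ)+a+b+1)+1) k) (rf (a+1) k) (Nat.factorial k : ℝ) (2^n) (((1-x)/2)^k)
      h1 h2 hD2 hD1 hA hfa hak hfact hk1 hn1 hs
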